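/- Let X_{i,j} and Y_{i,j} (1 ≤ i ≤ r, 2 ≤ j ≤ ℓ) be commuting indeterminates. For a Fibonacci matrix E of size r×ℓ, define wt(E;(i,j)) = X_{i,j} if some (a,b) ∈ LB(i,j)\{(i,j)} satisfies E_{a,b}=1; wt(E;(i,j)) = Y_{i,j} if E_{i,j}=1; and wt(E;(i,j)) = X_{i,j}+Y_{i,j} otherwise, where LB(i,j) = {(a,j-1): a ≤ i} ∪ {(a,j): a ≥ i}. Then ∑_E (-1)^{|E|} ∏_{i,j} wt(E;(i,j)) = ∏_{i,j} X_{i,j}, where the sum is over all Fibonacci matrices E of size r×ℓ and |E| is the number of ones in E. -/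

import Mathlib

open scoped Classical
open MvPolynomial

/-- A Fibonacci matrix (entries `true` = 1, `false` = 0): a 0-1 matrix whose first column
is zero, each column has at most one nonzero entry, and whenever `E a j = E b (j+1) = 1`
one has `a > b`. -/
def IsFibMat {r l : ℕ} (E : Fin r → Fin l → Bool) : Prop :=
  (∀ (i : Fin r) (j : Fin l), (j : ℕ) = 0 → E i j = false) ∧
  (∀ (j : Fin l) (a b : Fin r), E a j = true → E b j = true → a = b) ∧
  (∀ (a b : Fin r) (j j' : Fin l), E a j = true → E b j' = true →
    (j' : ℕ) = (j : ℕ) + 1 → (b : ℕ) < (a : ℕ))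

/-- The weight `wt(E;(i,j))`: `X (i,j)` if some cell `(a,b)` of the lightning bolt set
`LB(i,j) = {(a,j-1) : a ≤ i} ∪ {(a,j) : a ≥ i}` other than `(i,j)` itself carries a 1 of `E`;
`Y (i,j)` if `E i j = 1`; and `X (i,j) + Y (i,j)` otherwise. The `X` variables are indexed by
`Sum.inl`, the `Y` variables by `Sum.inr`. -/
noncomputable def wt {r l : ℕ} (E : Fin r → Fin l → Bool) (i : Fin r) (j : Fin l) :
    MvPolynomial ((Fin r × Fin l) ⊕ (Fin r × Fin l)) ℤ :=
  if ∃ a : Fin r, ∃ b : Fin l,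
      (((b : ℕ) + 1 = (j : ℕ) ∧ a ≤ i) ∨ (b = j ∧ i ≤ a)) ∧ (a, b) ≠ (i, j) ∧ E a b = true then
    X (Sum.inl (i, j))
  else if E i j = true then X (Sum.inr (i, j))
  else X (Sum.inl (i, j)) + X (Sum.inr (i, j))

namespace FibAux

set_option linter.unnecessarySeqFocus false in
lemma tele {S : Type*} [CommRing S] (n t : ℕ) (ht : t ≤ n) (x y : Fin n → S) :
    (∏ i : Fin n, if (i : ℕ) < t then x i + y i else x i)
      - ∑ b ∈ Finset.univ.filter (fun b : Fin n => (b : ℕ) < t),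
          (∏ i : Fin n, (if (i : ℕ) < (b : ℕ) then x i
            else if i = b then y i
            else if (i : ℕ) < t then x i + y i else x i))
    = ∏ i : Fin n, x i := by
  rcases Nat.eq_zero_or_pos n with hn | hn
  · subst hn; interval_cases t <;> simp
  set Q : ℕ → S := fun s => ∏ i : Fin n,
    (if (i : ℕ) < s then x i else if (i : ℕ) < t then x i + y i else x i) with hQ
  have hQ0 : Q 0 = ∏ i : Fin n, (if (i : ℕ) < t then x i + y i else x i) := by
    simp [hQ]
  have hQt : Q t = ∏ i : Fin n, x i := by
    refine Finset.prod_congr rfl fun i _ => ?_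
    by_cases h : (i : ℕ) < t <;> simp [h]
  have hstep : ∀ b : Fin n, (b : ℕ) < t →
      Q (b : ℕ) - Q ((b : ℕ) + 1)
        = ∏ i : Fin n, (if (i : ℕ) < (b : ℕ) then x i
            else if i = b then y i
            else if (i : ℕ) < t then x i + y i else x i) := by
    intro b hb
    have hmem : b ∈ (Finset.univ : Finset (Fin n)) := Finset.mem_univ b
    simp only [hQ]
    rw [← Finset.mul_prod_erase _ _ hmem, ← Finset.mul_prod_erase _ _ hmem,
        ← Finset.mul_prod_erase _ _ hmem]
    have h1 : ∀ i ∈ Finset.univ.erase b,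
        (if (i : ℕ) < (b : ℕ) then x i else if (i : ℕ) < t then x i + y i else x i)
          = (if (i : ℕ) < (b : ℕ) + 1 then x i else if (i : ℕ) < t then x i + y i else x i) := by
      intro i hi
      have hne : i ≠ b := Finset.ne_of_mem_erase hi
      have : (i : ℕ) < (b : ℕ) ↔ (i : ℕ) < (b : ℕ) + 1 := by
        constructor
        · omega
        · intro h; rcases Nat.lt_succ_iff_lt_or_eq.mp h with h | h
          · exact h
          · exact absurd (Fin.ext h) hne
      by_cases h : (i : ℕ) < (b : ℕ)
      · rw [if_pos h, if_pos (this.mp h)]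
      · rw [if_neg h, if_neg (fun hc => h (this.mpr hc))]
    have h2 : ∀ i ∈ Finset.univ.erase b,
        (if (i : ℕ) < (b : ℕ) then x i else if i = b then y i
          else if (i : ℕ) < t then x i + y i else x i)
          = (if (i : ℕ) < (b : ℕ) then x i else if (i : ℕ) < t then x i + y i else x i) := by
      intro i hi
      have hne : i ≠ b := Finset.ne_of_mem_erase hi
      simp [hne]
    rw [Finset.prod_congr rfl h2, ← Finset.prod_congr rfl h1]
    have hbb : ¬ ((b : ℕ) < (b : ℕ)) := lt_irrefl _
    rw [if_neg hbb, if_neg hbb, if_pos hb, if_pos (Nat.lt_succ_self _), if_pos (rfl : b = b)]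
    ring
  -- reindex the sum to range t
  have hre : ∑ b ∈ Finset.univ.filter (fun b : Fin n => (b : ℕ) < t),
      (∏ i : Fin n, (if (i : ℕ) < (b : ℕ) then x i
            else if i = b then y i
            else if (i : ℕ) < t then x i + y i else x i))
      = ∑ m ∈ Finset.range t, (Q m - Q (m + 1)) := by
    refine Finset.sum_nbij' (fun b => (b : ℕ)) (fun m => ⟨m % n, Nat.mod_lt _ hn⟩) ?_ ?_ ?_ ?_ ?_
    · intro b hb; exact Finset.mem_range.mpr (Finset.mem_filter.mp hb).2
    · intro m hm
      refine Finset.mem_filter.mpr ⟨Finset.mem_univ _, ?_⟩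
      have hmt := Finset.mem_range.mp hm
      simpa [Nat.mod_eq_of_lt (lt_of_lt_of_le hmt ht)] using hmt
    · intro b hb
      exact Fin.ext (Nat.mod_eq_of_lt b.isLt)
    · intro m hm
      exact Nat.mod_eq_of_lt (lt_of_lt_of_le (Finset.mem_range.mp hm) ht)
    · intro b hb
      exact (hstep b (Finset.mem_filter.mp hb).2).symm
  rw [hre, Finset.sum_range_sub' Q, hQ0.symm, hQt.symm]
  ring

variable {r l : ℕ}

noncomputable def onesCard (E : Fin r → Fin l → Bool) : ℕ :=
  (Finset.univ.filter fun p : Fin r × Fin l => E p.1 p.2 = true).card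

def setCol (E : Fin r → Fin l → Bool) (j0 : Fin l) (c : Option (Fin r)) :
    Fin r → Fin l → Bool :=
  fun a b => if b = j0 then decide (c = some a) else E a b

lemma setCol_apply (E : Fin r → Fin l → Bool) (j0 : Fin l) (c : Option (Fin r)) (a : Fin r)
    (b : Fin l) : setCol E j0 c a b = if b = j0 then decide (c = some a) else E a b := rfl

noncomputable def colOf (E : Fin r → Fin l → Bool) (j0 : Fin l) : Option (Fin r) :=
  if h : ∃ a, E a j0 = true then some h.choose else none

lemma colOf_eq (E : Fin r → Fin l → Bool) (j0 : Fin l) :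
    colOf E j0 = if h : ∃ a, E a j0 = true then some h.choose else none := rfl

lemma setCol_none (E : Fin r → Fin l → Bool) (j0 : Fin l) (h : ∀ a, E a j0 = false) :
    setCol E j0 none = E := by
  funext a b
  by_cases hb : b = j0
  · subst hb; simp [setCol, (h a)]
  · simp [setCol, hb]

lemma onesCard_setCol_some (E : Fin r → Fin l → Bool) (j0 : Fin l)
    (h : ∀ a, E a j0 = false) (b : Fin r) :
    onesCard (setCol E j0 (some b)) = onesCard E + 1 := by
  unfold onesCard
  have hset : (Finset.univ.filter fun p : Fin r × Fin l => setCol E j0 (some b) p.1 p.2 = true)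
      = insert (b, j0) (Finset.univ.filter fun p : Fin r × Fin l => E p.1 p.2 = true) := by
    ext ⟨p1, p2⟩
    simp only [Finset.mem_filter, Finset.mem_univ, true_and, Finset.mem_insert, Prod.mk.injEq]
    constructor
    · intro hp
      by_cases hc : p2 = j0
      · subst hc
        left
        rw [setCol_apply, if_pos rfl, decide_eq_true_eq] at hp
        exact ⟨(Option.some_injective _ hp).symm, rfl⟩
      · right
        rw [setCol_apply, if_neg hc] at hp
        exact hp
    · rintro (⟨rfl, rfl⟩ | hp)
      · rw [setCol_apply, if_pos rfl]
        simp
      · have hc : p2 ≠ j0 := by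
          rintro rfl
          rw [h p1] at hp
          exact Bool.noConfusion hp
        rw [setCol_apply, if_neg hc]
        exact hp
  rw [hset, Finset.card_insert_of_notMem (by simp [h])]

/-- weight congruence: `wt E i j` only depends on columns `j-1` and `j`. -/
lemma wt_congr (E F : Fin r → Fin l → Bool) (i : Fin r) (j : Fin l)
    (h : ∀ (a : Fin r) (b : Fin l), ((b : ℕ) + 1 = (j : ℕ) ∨ b = j) → E a b = F a b) :
    wt E i j = wt F i j := by
  have h1 : (∃ a : Fin r, ∃ b : Fin l,
      (((b : ℕ) + 1 = (j : ℕ) ∧ a ≤ i) ∨ (b = j ∧ i ≤ a)) ∧ (a, b) ≠ (i, j) ∧ E a b = true)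
      ↔ (∃ a : Fin r, ∃ b : Fin l,
      (((b : ℕ) + 1 = (j : ℕ) ∧ a ≤ i) ∨ (b = j ∧ i ≤ a)) ∧ (a, b) ≠ (i, j) ∧ F a b = true) := by
    constructor <;> rintro ⟨a, b, hc, hne, he⟩ <;> refine ⟨a, b, hc, hne, ?_⟩
    · rw [← h a b (hc.imp (fun x => x.1) (fun x => x.1))]; exact he
    · rw [h a b (hc.imp (fun x => x.1) (fun x => x.1))]; exact he
  have h2 : E i j = F i j := h i j (Or.inr rfl)
  unfold wt
  simp only [h1, h2]

lemma wt_setCol_k (k : ℕ) (jk jk1 : Fin l) (hjk : (jk : ℕ) = k) (hjk1 : (jk1 : ℕ) + 1 = k)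
    (E' : Fin r → Fin l → Bool) (t : ℕ)
    (K1 : ∀ i : Fin r, (∃ a, a ≤ i ∧ E' a jk1 = true) ↔ t ≤ (i : ℕ))
    (c : Option (Fin r)) (i : Fin r) :
    wt (setCol E' jk c) i jk
      = if t ≤ (i : ℕ) ∨ (∃ b : Fin r, c = some b ∧ (i : ℕ) < (b : ℕ)) then
          X (Sum.inl (i, jk))
        else if c = some i then X (Sum.inr (i, jk))
        else X (Sum.inl (i, jk)) + X (Sum.inr (i, jk)) := by
  have hne : jk1 ≠ jk := by
    intro hh; rw [hh] at hjk1; omega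
  have hcond : (∃ a : Fin r, ∃ b : Fin l,
      (((b : ℕ) + 1 = (jk : ℕ) ∧ a ≤ i) ∨ (b = jk ∧ i ≤ a)) ∧ (a, b) ≠ (i, jk) ∧
        setCol E' jk c a b = true)
      ↔ (t ≤ (i : ℕ) ∨ (∃ b : Fin r, c = some b ∧ (i : ℕ) < (b : ℕ))) := by
    constructor
    · rintro ⟨a, b, hc, hnel, he⟩
      rcases hc with ⟨hb, ha⟩ | ⟨hb, ha⟩
      · left
        have hbjk1 : b = jk1 := by apply Fin.ext; omega
        subst hbjk1
        have : E' a b = true := by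
          rw [setCol_apply, if_neg hne] at he; exact he
        exact (K1 i).mp ⟨a, ha, this⟩
      · right
        subst hb
        have hca : c = some a := by
          rw [setCol_apply, if_pos rfl] at he
          exact of_decide_eq_true he
        have hai : a ≠ i := fun hh => hnel (by rw [hh])
        exact ⟨a, hca, lt_of_le_of_ne ha (fun hh => hai (Fin.ext hh.symm))⟩
    · rintro (hti | ⟨b0, hc0, hib0⟩)
      · obtain ⟨a, ha, hE⟩ := (K1 i).mpr hti
        refine ⟨a, jk1, Or.inl ⟨by omega, ha⟩, ?_, ?_⟩
        · intro hh
          exact hne (congrArg Prod.snd hh)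
        · rw [setCol_apply, if_neg hne]; exact hE
      · refine ⟨b0, jk, Or.inr ⟨rfl, le_of_lt hib0⟩, ?_, ?_⟩
        · intro hh
          have : b0 = i := congrArg Prod.fst hh
          subst this; exact lt_irrefl _ hib0
        · rw [setCol_apply, if_pos rfl, hc0, decide_eq_true_eq]
  have hEij : setCol E' jk c i jk = true ↔ c = some i := by
    rw [setCol_apply, if_pos rfl, decide_eq_true_eq]
  by_cases h1 : t ≤ (i : ℕ) ∨ (∃ b : Fin r, c = some b ∧ (i : ℕ) < (b : ℕ))
  · rw [wt, if_pos (hcond.mpr h1), if_pos h1]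
  · rw [wt, if_neg (fun hc' => h1 (hcond.mp hc')), if_neg h1]
    by_cases h2 : c = some i
    · rw [if_pos (hEij.mpr h2), if_pos h2]
    · rw [if_neg (fun hc' => h2 (hEij.mp hc')), if_neg h2]

lemma colsum_aux (k : ℕ) (jk jk1 : Fin l) (hjk : (jk : ℕ) = k) (hjk1 : (jk1 : ℕ) + 1 = k)
    (E' : Fin r → Fin l → Bool) (hsupp : ∀ (i : Fin r) (j : Fin l), k ≤ (j : ℕ) → E' i j = false)
    (t : ℕ) (htr : t ≤ r)
    (K1 : ∀ i : Fin r, (∃ a, a ≤ i ∧ E' a jk1 = true) ↔ t ≤ (i : ℕ))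
    (K2 : ∀ b : Fin r, (∀ a, E' a jk1 = true → (b : ℕ) < (a : ℕ)) ↔ (b : ℕ) < t) :
    ∑ c ∈ (Finset.univ.filter fun c : Option (Fin r) =>
        ∀ b : Fin r, c = some b → ∀ a : Fin r, E' a jk1 = true → (b : ℕ) < (a : ℕ)),
      ((-1 : MvPolynomial ((Fin r × Fin l) ⊕ (Fin r × Fin l)) ℤ) ^ onesCard (setCol E' jk c)
        * ∏ i : Fin r, wt (setCol E' jk c) i jk)
    = (-1) ^ onesCard E' * ∏ i : Fin r, X (Sum.inl (i, jk)) := by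
  have hcolz : ∀ a, E' a jk = false := fun a => hsupp a jk (by omega)
  have hvs : (Finset.univ.filter fun c : Option (Fin r) =>
        ∀ b : Fin r, c = some b → ∀ a : Fin r, E' a jk1 = true → (b : ℕ) < (a : ℕ))
      = insert none ((Finset.univ.filter fun b : Fin r => (b : ℕ) < t).image some) := by
    ext c
    cases c with
    | none => simp
    | some b =>
      simp only [Finset.mem_filter, Finset.mem_univ, true_and, Finset.mem_insert,
        Finset.mem_image, Option.some.injEq, reduceCtorEq, false_or]
      constructor
      · intro hh
        exact ⟨b, (K2 b).mp (hh b rfl), rfl⟩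
      · rintro ⟨b', hb', rfl⟩
        intro b'' hb'' a ha
        cases hb''
        exact (K2 _).mpr hb' a ha
  rw [hvs, Finset.sum_insert (by simp), Finset.sum_image (fun a _ b _ h => Option.some_injective _ h)]
  -- none term
  have hnone : setCol E' jk (none : Option (Fin r)) = E' := setCol_none E' jk hcolz
  have hwt_none : ∀ i : Fin r, wt (setCol E' jk none) i jk
      = if (i : ℕ) < t then X (Sum.inl (i, jk)) + X (Sum.inr (i, jk)) else X (Sum.inl (i, jk)) := by
    intro i
    rw [wt_setCol_k k jk jk1 hjk hjk1 E' t K1 none i]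
    by_cases h : t ≤ (i : ℕ)
    · rw [if_pos (Or.inl h), if_neg (by omega)]
    · have hcnot : ¬(t ≤ (i : ℕ) ∨ ∃ b : Fin r, (none : Option (Fin r)) = some b ∧ (i : ℕ) < (b : ℕ)) := by
        rintro (h1 | ⟨b, hb, _⟩)
        · exact h h1
        · exact Option.some_ne_none _ hb.symm
      rw [if_neg hcnot, if_neg (by rintro hh; exact Option.some_ne_none _ hh.symm), if_pos (by omega)]
  have hwt_some : ∀ (b : Fin r), (b : ℕ) < t → ∀ i : Fin r,
      wt (setCol E' jk (some b)) i jk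
      = (if (i : ℕ) < (b : ℕ) then X (Sum.inl (i, jk))
          else if i = b then X (Sum.inr (i, jk))
          else if (i : ℕ) < t then X (Sum.inl (i, jk)) + X (Sum.inr (i, jk))
          else X (Sum.inl (i, jk))) := by
    intro b hb i
    rw [wt_setCol_k k jk jk1 hjk hjk1 E' t K1 (some b) i]
    by_cases h1 : (i : ℕ) < (b : ℕ)
    · rw [if_pos (Or.inr ⟨b, rfl, h1⟩), if_pos h1]
    · rw [if_neg h1]
      by_cases h2 : i = b
      · subst h2
        rw [if_neg (by
            rintro (hh | ⟨b', hb', hlt⟩)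
            · omega
            · cases hb'; omega),
          if_pos rfl, if_pos rfl]
      · rw [if_neg (fun hh => h2 (Option.some_injective _ hh).symm), if_neg h2]
        by_cases h3 : (i : ℕ) < t
        · rw [if_neg (by
            rintro (hh | ⟨b', hb', hlt⟩)
            · omega
            · cases hb'
              exact h1 hlt), if_pos h3]
        · rw [if_pos (Or.inl (by omega)), if_neg h3]
  have hones : ∀ b : Fin r, onesCard (setCol E' jk (some b)) = onesCard E' + 1 :=
    onesCard_setCol_some E' jk hcolz
  have e1 : (-1 : MvPolynomial ((Fin r × Fin l) ⊕ (Fin r × Fin l)) ℤ) ^ onesCard (setCol E' jk none)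
      * ∏ i : Fin r, wt (setCol E' jk none) i jk
      = (-1) ^ onesCard E' * ∏ i : Fin r,
          (if (i : ℕ) < t then X (Sum.inl (i, jk)) + X (Sum.inr (i, jk)) else X (Sum.inl (i, jk))) := by
    rw [hnone]
    exact congrArg _ (Finset.prod_congr rfl fun i _ => by rw [← hnone, hwt_none i])
  have e2 : ∀ b ∈ Finset.univ.filter fun b : Fin r => (b : ℕ) < t,
      (-1 : MvPolynomial ((Fin r × Fin l) ⊕ (Fin r × Fin l)) ℤ) ^ onesCard (setCol E' jk (some b))
        * ∏ i : Fin r, wt (setCol E' jk (some b)) i jk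
      = -((-1) ^ onesCard E' * ∏ i : Fin r,
          (if (i : ℕ) < (b : ℕ) then X (Sum.inl (i, jk))
            else if i = b then X (Sum.inr (i, jk))
            else if (i : ℕ) < t then X (Sum.inl (i, jk)) + X (Sum.inr (i, jk))
            else X (Sum.inl (i, jk)))) := by
    intro b hb
    rw [hones b, pow_succ, Finset.prod_congr rfl fun i _ =>
      hwt_some b (Finset.mem_filter.mp hb).2 i]
    ring
  rw [e1, Finset.sum_congr rfl e2]
  have ht := tele (S := MvPolynomial ((Fin r × Fin l) ⊕ (Fin r × Fin l)) ℤ) r t htr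
    (fun i => X (Sum.inl (i, jk))) (fun i => X (Sum.inr (i, jk)))
  rw [Finset.sum_neg_distrib, ← Finset.mul_sum]
  linear_combination ((-1 : MvPolynomial ((Fin r × Fin l) ⊕ (Fin r × Fin l)) ℤ) ^ onesCard E') * ht

lemma colsum (k : ℕ) (jk jk1 : Fin l) (hjk : (jk : ℕ) = k) (hjk1 : (jk1 : ℕ) + 1 = k)
    (E' : Fin r → Fin l → Bool) (hfib' : IsFibMat E')
    (hsupp : ∀ (i : Fin r) (j : Fin l), k ≤ (j : ℕ) → E' i j = false) :
    ∑ c ∈ (Finset.univ.filter fun c : Option (Fin r) =>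
        ∀ b : Fin r, c = some b → ∀ a : Fin r, E' a jk1 = true → (b : ℕ) < (a : ℕ)),
      ((-1 : MvPolynomial ((Fin r × Fin l) ⊕ (Fin r × Fin l)) ℤ) ^ onesCard (setCol E' jk c)
        * ∏ i : Fin r, wt (setCol E' jk c) i jk)
    = (-1) ^ onesCard E' * ∏ i : Fin r, X (Sum.inl (i, jk)) := by
  by_cases hex : ∃ a : Fin r, E' a jk1 = true
  · obtain ⟨a0, ha0⟩ := hex
    have huniq : ∀ a, E' a jk1 = true → a = a0 := fun a ha => hfib'.2.1 jk1 a a0 ha ha0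
    refine colsum_aux k jk jk1 hjk hjk1 E' hsupp (a0 : ℕ) (le_of_lt a0.isLt) ?_ ?_
    · intro i
      constructor
      · rintro ⟨a, hai, ha⟩
        have h := huniq a ha
        subst h
        exact hai
      · intro h
        exact ⟨a0, h, ha0⟩
    · intro b
      constructor
      · intro h
        exact h a0 ha0
      · intro h a ha
        have h' := huniq a ha
        subst h'
        exact h
  · refine colsum_aux k jk jk1 hjk hjk1 E' hsupp r le_rfl ?_ ?_
    · intro i
      constructor
      · rintro ⟨a, _, ha⟩
        exact absurd ⟨a, ha⟩ hex
      · intro h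
        exact absurd i.isLt (by omega)
    · intro b
      constructor
      · intro _
        exact b.isLt
      · intro _ a ha
        exact absurd ⟨a, ha⟩ hex

lemma fib_of_le (E F : Fin r → Fin l → Bool) (h : ∀ a b, F a b = true → E a b = true)
    (hE : IsFibMat E) : IsFibMat F := by
  obtain ⟨h0, h1, h2⟩ := hE
  refine ⟨?_, ?_, ?_⟩
  · intro i j hj
    cases hF : F i j
    · rfl
    · exact absurd (h i j hF) (by rw [h0 i j hj]; simp)
  · intro j a b ha hb
    exact h1 j a b (h _ _ ha) (h _ _ hb)
  · intro a b j j' ha hb hj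
    exact h2 a b j j' (h _ _ ha) (h _ _ hb) hj

lemma setCol_none_le (E : Fin r → Fin l → Bool) (j0 : Fin l) (a : Fin r) (b : Fin l)
    (h : setCol E j0 none a b = true) : E a b = true := by
  by_cases hb : b = j0
  · rw [setCol_apply, if_pos hb] at h
    exact absurd h (by simp)
  · rwa [setCol_apply, if_neg hb] at h

noncomputable def A (r l : ℕ) (k : ℕ) : Finset (Fin r → Fin l → Bool) :=
  Finset.univ.filter (fun E => IsFibMat E ∧
    ∀ (i : Fin r) (j : Fin l), k ≤ (j : ℕ) → E i j = false)

noncomputable def T (r l : ℕ) (k : ℕ) : MvPolynomial ((Fin r × Fin l) ⊕ (Fin r × Fin l)) ℤ :=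
  ∑ E ∈ A r l k, (-1) ^ onesCard E *
    ∏ i : Fin r, ∏ j ∈ Finset.univ.filter (fun j : Fin l => 1 ≤ (j : ℕ)),
      (if (j : ℕ) < k then wt E i j else X (Sum.inl (i, j)))

lemma step (k : ℕ) (hk1 : 1 ≤ k) : T r l (k + 1) = T r l k := by
  by_cases hkl : k < l
  swap
  · -- trivial case : no column k
    have hA : A r l (k + 1) = A r l k := by
      unfold A
      apply Finset.filter_congr
      intro E _
      have hv : ∀ m : ℕ, l ≤ m → (∀ (i : Fin r) (j : Fin l), m ≤ (j : ℕ) → E i j = false) := by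
        intro m hm i j hj
        exact absurd j.isLt (by omega)
      constructor
      · intro h
        exact ⟨h.1, hv k (by omega)⟩
      · intro h
        exact ⟨h.1, hv (k + 1) (by omega)⟩
    rw [T, T, hA]
    refine Finset.sum_congr rfl fun E _ => ?_
    congr 1
    refine Finset.prod_congr rfl fun i _ => Finset.prod_congr rfl fun j _ => ?_
    have hjl : (j : ℕ) < k := lt_of_lt_of_le j.isLt (by omega)
    rw [if_pos (by omega), if_pos hjl]
  · -- main case
    set jk : Fin l := ⟨k, hkl⟩ with hjkdef
    set jk1 : Fin l := ⟨k - 1, by omega⟩ with hjk1def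
    have hjk : (jk : ℕ) = k := rfl
    have hjk1 : (jk1 : ℕ) + 1 = k := by
      simp only [hjk1def]
      omega
    have hne : jk1 ≠ jk := by
      intro hh
      rw [hh] at hjk1
      omega
    set B : Finset ((Fin r → Fin l → Bool) × Option (Fin r)) :=
      (A r l k ×ˢ (Finset.univ : Finset (Option (Fin r)))).filter
        (fun p => ∀ b : Fin r, p.2 = some b → ∀ a : Fin r, p.1 a jk1 = true →
          (b : ℕ) < (a : ℕ)) with hBdef
    have hlinv : ∀ E ∈ A r l (k + 1), setCol (setCol E jk none) jk (colOf E jk) = E := by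
      intro E hE
      obtain ⟨hfib, hsupp⟩ := (Finset.mem_filter.mp hE).2
      funext a b
      by_cases hb : b = jk
      · subst hb
        rw [setCol_apply, if_pos rfl]
        by_cases hex : ∃ a', E a' jk = true
        · have hcs := hex.choose_spec
          cases hEa : E a jk
          · have hner : hex.choose ≠ a := by
              intro hh
              rw [hh, hEa] at hcs
              exact Bool.noConfusion hcs
            rw [colOf_eq, dif_pos hex]
            simp [hner]
          · have : hex.choose = a := hfib.2.1 jk _ _ hcs hEa
            rw [colOf_eq, dif_pos hex]
            simp [this]
        · rw [colOf_eq, dif_neg hex]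
          have hEa : E a jk = false := by
            cases hEa : E a jk
            · rfl
            · exact absurd ⟨a, hEa⟩ hex
          rw [hEa]
          simp
      · rw [setCol_apply, if_neg hb, setCol_apply, if_neg hb]
    have hstep1 : T r l (k + 1) = ∑ p ∈ B,
        ((-1 : MvPolynomial ((Fin r × Fin l) ⊕ (Fin r × Fin l)) ℤ) ^
            onesCard (setCol p.1 jk p.2) *
          ∏ i : Fin r, ∏ j ∈ Finset.univ.filter (fun j : Fin l => 1 ≤ (j : ℕ)),
            (if (j : ℕ) < k + 1 then wt (setCol p.1 jk p.2) i j else X (Sum.inl (i, j)))) := by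
      rw [T]
      refine Finset.sum_nbij' (fun E => (setCol E jk none, colOf E jk))
        (fun p => setCol p.1 jk p.2) ?_ ?_ ?_ ?_ ?_
      · -- forward membership
        intro E hE
        obtain ⟨hfib, hsupp⟩ := (Finset.mem_filter.mp hE).2
        refine Finset.mem_filter.mpr ⟨Finset.mem_product.mpr ⟨?_, Finset.mem_univ _⟩, ?_⟩
        · refine Finset.mem_filter.mpr ⟨Finset.mem_univ _,
            fib_of_le E _ (setCol_none_le E jk) hfib, ?_⟩
          intro i j hj
          show setCol E jk none i j = false
          by_cases hjjk : j = jk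
          · rw [setCol_apply, if_pos hjjk]
            simp
          · rw [setCol_apply, if_neg hjjk]
            refine hsupp i j ?_
            have : (j : ℕ) ≠ k := fun hh => hjjk (Fin.ext (by rw [hh, hjk]))
            omega
        · intro b hb a ha
          have hEa : E a jk1 = true := setCol_none_le E jk a jk1 ha
          have hEb : E b jk = true := by
            rw [colOf_eq] at hb
            split at hb
            · rename_i hex
              have := hex.choose_spec
              cases hb
              exact this
            · exact absurd hb (by simp)
          exact hfib.2.2 a b jk1 jk hEa hEb (by omega)
      · -- backward membership
        rintro ⟨E', c⟩ hp
        dsimp only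
        obtain ⟨hmem, hval'⟩ := Finset.mem_filter.mp hp
        obtain ⟨hA', _⟩ := Finset.mem_product.mp hmem
        obtain ⟨hfib'0, hsupp0⟩ := (Finset.mem_filter.mp hA').2
        have hval : ∀ b : Fin r, c = some b → ∀ a : Fin r, E' a jk1 = true →
            (b : ℕ) < (a : ℕ) := hval'
        have hfib' : IsFibMat E' := hfib'0
        have hsupp : ∀ (i : Fin r) (j : Fin l), k ≤ (j : ℕ) → E' i j = false := hsupp0
        refine Finset.mem_filter.mpr ⟨Finset.mem_univ _, ?_, ?_⟩
        · refine ⟨?_, ?_, ?_⟩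
          · intro i j hj
            have hjjk : j ≠ jk := by
              intro hh
              rw [hh] at hj
              omega
            rw [setCol_apply, if_neg hjjk]
            exact hfib'.1 i j hj
          · intro j a b ha hb
            by_cases hjjk : j = jk
            · rw [setCol_apply, if_pos hjjk, decide_eq_true_eq] at ha hb
              rw [ha] at hb
              exact Option.some_injective _ hb
            · rw [setCol_apply, if_neg hjjk] at ha hb
              exact hfib'.2.1 j a b ha hb
          · intro a b j j' ha hb hjj
            by_cases hj' : j' = jk
            · subst hj'
              rw [setCol_apply, if_pos rfl, decide_eq_true_eq] at hb
              have hjjk1 : j = jk1 := Fin.ext (by omega)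
              rw [hjjk1, setCol_apply, if_neg hne] at ha
              exact hval b hb a ha
            · rw [setCol_apply, if_neg hj'] at hb
              by_cases hj : j = jk
              · subst hj
                exact absurd hb (by rw [hsupp b j' (by omega)]; simp)
              · rw [setCol_apply, if_neg hj] at ha
                exact hfib'.2.2 a b j j' ha hb hjj
        · intro i j hj
          have hjjk : j ≠ jk := by
            intro hh
            rw [hh] at hj
            simp only [hjk] at hj
            omega
          rw [setCol_apply, if_neg hjjk]
          exact hsupp i j (by omega)
      · -- left inverse
        intro E hE
        exact hlinv E hE
      · -- right inverse
        rintro ⟨E', c⟩ hp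
        dsimp only
        obtain ⟨hmem, hval'⟩ := Finset.mem_filter.mp hp
        obtain ⟨hA', _⟩ := Finset.mem_product.mp hmem
        obtain ⟨hfib'0, hsupp0⟩ := (Finset.mem_filter.mp hA').2
        have hval : ∀ b : Fin r, c = some b → ∀ a : Fin r, E' a jk1 = true →
            (b : ℕ) < (a : ℕ) := hval'
        have hfib' : IsFibMat E' := hfib'0
        have hsupp : ∀ (i : Fin r) (j : Fin l), k ≤ (j : ℕ) → E' i j = false := hsupp0
        have h1 : setCol (setCol E' jk c) jk none = E' := by
          funext a b
          by_cases hb : b = jk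
          · subst hb
            rw [setCol_apply, if_pos rfl, (hsupp a jk (by omega) : _)]
            simp
          · rw [setCol_apply, if_neg hb, setCol, if_neg hb]
        have h2 : colOf (setCol E' jk c) jk = c := by
          cases c with
          | none =>
            rw [colOf_eq, dif_neg]
            rintro ⟨a, ha⟩
            rw [setCol_apply, if_pos rfl] at ha
            exact absurd ha (by simp)
          | some b =>
            have hex : ∃ a, setCol E' jk (some b) a jk = true :=
              ⟨b, by rw [setCol_apply, if_pos rfl]; simp⟩
            rw [colOf_eq, dif_pos hex]
            have hcs := hex.choose_spec
            rw [setCol_apply, if_pos rfl, decide_eq_true_eq] at hcs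
            rw [← Option.some_injective _ hcs]
        rw [h1, h2]
      · -- function values
        intro E hE
        dsimp only
        rw [hlinv E hE]
    have hmemB : ∀ p : (Fin r → Fin l → Bool) × Option (Fin r),
        p ∈ B ↔ p.1 ∈ A r l k ∧ p.2 ∈ (Finset.univ.filter fun c : Option (Fin r) =>
          ∀ b : Fin r, c = some b → ∀ a : Fin r, p.1 a jk1 = true → (b : ℕ) < (a : ℕ)) := by
      intro p
      rw [hBdef]
      simp only [Finset.mem_filter, Finset.mem_product, Finset.mem_univ, true_and, and_true]
    have hstep2 : ∑ p ∈ B,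
        ((-1 : MvPolynomial ((Fin r × Fin l) ⊕ (Fin r × Fin l)) ℤ) ^
            onesCard (setCol p.1 jk p.2) *
          ∏ i : Fin r, ∏ j ∈ Finset.univ.filter (fun j : Fin l => 1 ≤ (j : ℕ)),
            (if (j : ℕ) < k + 1 then wt (setCol p.1 jk p.2) i j else X (Sum.inl (i, j))))
        = ∑ E' ∈ A r l k, ∑ c ∈ (Finset.univ.filter fun c : Option (Fin r) =>
            ∀ b : Fin r, c = some b → ∀ a : Fin r, E' a jk1 = true → (b : ℕ) < (a : ℕ)),
          ((-1 : MvPolynomial ((Fin r × Fin l) ⊕ (Fin r × Fin l)) ℤ) ^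
              onesCard (setCol E' jk c) *
            ∏ i : Fin r, ∏ j ∈ Finset.univ.filter (fun j : Fin l => 1 ≤ (j : ℕ)),
              (if (j : ℕ) < k + 1 then wt (setCol E' jk c) i j else X (Sum.inl (i, j)))) :=
      Finset.sum_finset_product' (f := fun E' c =>
          ((-1 : MvPolynomial ((Fin r × Fin l) ⊕ (Fin r × Fin l)) ℤ) ^
              onesCard (setCol E' jk c) *
            ∏ i : Fin r, ∏ j ∈ Finset.univ.filter (fun j : Fin l => 1 ≤ (j : ℕ)),
              (if (j : ℕ) < k + 1 then wt (setCol E' jk c) i j else X (Sum.inl (i, j)))))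
        B (A r l k) _ hmemB
    rw [hstep1, hstep2, T]
    refine Finset.sum_congr rfl fun E' hE' => ?_
    obtain ⟨hfib', hsupp⟩ := (Finset.mem_filter.mp hE').2
    have hjkJ : jk ∈ Finset.univ.filter (fun j : Fin l => 1 ≤ (j : ℕ)) :=
      Finset.mem_filter.mpr ⟨Finset.mem_univ _, by omega⟩
    have hsplit : ∀ c : Option (Fin r),
        (∏ i : Fin r, ∏ j ∈ Finset.univ.filter (fun j : Fin l => 1 ≤ (j : ℕ)),
          (if (j : ℕ) < k + 1 then wt (setCol E' jk c) i j else X (Sum.inl (i, j))))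
        = (∏ i : Fin r, wt (setCol E' jk c) i jk) *
          ∏ i : Fin r, ∏ j ∈ (Finset.univ.filter (fun j : Fin l => 1 ≤ (j : ℕ))).erase jk,
            (if (j : ℕ) < k then wt E' i j else X (Sum.inl (i, j))) := by
      intro c
      rw [← Finset.prod_mul_distrib]
      refine Finset.prod_congr rfl fun i _ => ?_
      rw [← Finset.mul_prod_erase _ _ hjkJ]
      congr 1
      · rw [if_pos (by omega)]
      · refine Finset.prod_congr rfl fun j hj => ?_
        have hjne : j ≠ jk := Finset.ne_of_mem_erase hj
        have hj1 : 1 ≤ (j : ℕ) := (Finset.mem_filter.mp (Finset.mem_of_mem_erase hj)).2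
        have hjnk : (j : ℕ) ≠ k := fun hh => hjne (Fin.ext (by rw [hh, hjk]))
        by_cases hjlt : (j : ℕ) < k
        · rw [if_pos (by omega), if_pos hjlt]
          refine wt_congr _ _ i j fun a b hb => ?_
          have hbne : b ≠ jk := by
            rcases hb with hb | hb
            · intro hh
              rw [hh, hjk] at hb
              omega
            · rw [hb]
              exact hjne
          rw [setCol_apply, if_neg hbne]
        · rw [if_neg (by omega), if_neg hjlt]
    have hF0split : (∏ i : Fin r, ∏ j ∈ Finset.univ.filter (fun j : Fin l => 1 ≤ (j : ℕ)),
          (if (j : ℕ) < k then wt E' i j else X (Sum.inl (i, j))))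
        = (∏ i : Fin r, (X (Sum.inl (i, jk)) :
              MvPolynomial ((Fin r × Fin l) ⊕ (Fin r × Fin l)) ℤ)) *
          ∏ i : Fin r, ∏ j ∈ (Finset.univ.filter (fun j : Fin l => 1 ≤ (j : ℕ))).erase jk,
            (if (j : ℕ) < k then wt E' i j else X (Sum.inl (i, j))) := by
      rw [← Finset.prod_mul_distrib]
      refine Finset.prod_congr rfl fun i _ => ?_
      rw [← Finset.mul_prod_erase _ _ hjkJ]
      congr 1
      rw [if_neg (by omega)]
    simp only [hsplit]
    simp only [← mul_assoc]
    rw [← Finset.sum_mul, colsum k jk jk1 hjk hjk1 E' hfib' hsupp, hF0split]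
    ring

lemma A_low (m : ℕ) (hm : m ≤ 1) : A r l m = {fun _ _ => false} := by
  ext E
  simp only [A, Finset.mem_filter, Finset.mem_univ, true_and, Finset.mem_singleton]
  constructor
  · rintro ⟨hfib, hsupp⟩
    funext i j
    rcases Nat.eq_zero_or_pos (j : ℕ) with hj | hj
    · exact hfib.1 i j hj
    · exact hsupp i j (by omega)
  · rintro rfl
    exact ⟨⟨fun i j _ => rfl, fun j a b ha _ => Bool.noConfusion ha,
      fun a b j j' ha _ _ => Bool.noConfusion ha⟩, fun i j _ => rfl⟩

lemma T_low (m : ℕ) (hm : m ≤ 1) :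
    T r l m = ∏ i : Fin r, ∏ j ∈ Finset.univ.filter (fun j : Fin l => 1 ≤ (j : ℕ)),
      (X (Sum.inl (i, j)) : MvPolynomial ((Fin r × Fin l) ⊕ (Fin r × Fin l)) ℤ) := by
  have hzero : onesCard (fun _ _ => false : Fin r → Fin l → Bool) = 0 := by
    unfold onesCard
    simp
  rw [T, A_low m hm, Finset.sum_singleton, hzero, pow_zero, one_mul]
  refine Finset.prod_congr rfl fun i _ => Finset.prod_congr rfl fun j hj => ?_
  have h1 : 1 ≤ (j : ℕ) := (Finset.mem_filter.mp hj).2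
  rw [if_neg (by omega)]

lemma T_all (k : ℕ) :
    T r l k = ∏ i : Fin r, ∏ j ∈ Finset.univ.filter (fun j : Fin l => 1 ≤ (j : ℕ)),
      (X (Sum.inl (i, j)) : MvPolynomial ((Fin r × Fin l) ⊕ (Fin r × Fin l)) ℤ) := by
  induction k with
  | zero => exact T_low 0 (by omega)
  | succ k ih =>
    rcases Nat.eq_zero_or_pos k with rfl | hk
    · exact T_low 1 (by omega)
    · rw [step k hk, ih]

end FibAux

/-- `∑_E (-1)^|E| ∏_{1≤i≤r, 2≤j≤ℓ} wt(E;(i,j)) = ∏_{1≤i≤r, 2≤j≤ℓ} X_{i,j}`,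
the sum being over all Fibonacci matrices `E` of size `r × ℓ`, where `|E|` is the number
of ones of `E`. -/
theorem fib_matrix_weight_sum (r l : ℕ) :
    ∑ E ∈ Finset.univ.filter (fun E : Fin r → Fin l → Bool => IsFibMat E),
      (-1 : MvPolynomial ((Fin r × Fin l) ⊕ (Fin r × Fin l)) ℤ) ^
          ((Finset.univ.filter fun p : Fin r × Fin l => E p.1 p.2 = true).card) *
        ∏ i : Fin r, ∏ j ∈ Finset.univ.filter (fun j : Fin l => 1 ≤ (j : ℕ)), wt E i j
    = ∏ i : Fin r, ∏ j ∈ Finset.univ.filter (fun j : Fin l => 1 ≤ (j : ℕ)),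
        (X (Sum.inl (i, j)) : MvPolynomial ((Fin r × Fin l) ⊕ (Fin r × Fin l)) ℤ) := by
  have hA : Finset.univ.filter (fun E : Fin r → Fin l → Bool => IsFibMat E)
      = FibAux.A r l l := by
    unfold FibAux.A
    apply Finset.filter_congr
    intro E _
    constructor
    · intro h
      exact ⟨h, fun i j hj => absurd j.isLt (by omega)⟩
    · intro h
      exact h.1
  rw [hA, ← FibAux.T_all (r := r) (l := l) l, FibAux.T]
  refine Finset.sum_congr rfl fun E _ => ?_
  congr 1
  refine Finset.prod_congr rfl fun i _ => Finset.prod_congr rfl fun j _ => ?_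
  exact (if_pos j.isLt).symm
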